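/- arXiv:1110.6327 — 2 statements merged into one kernel-verified Lean document; each statement's English description precedes it below -/
import Mathlib

section
/- Let β > 1 + √3 with β ∉ ℕ and 𝒜 = {0,1,…,⌊β⌋}. Then the set {x ∈ J_{−β,𝒜} : R_{−β,𝒜}(x) is a singleton} of numbers having a unique (−β)-representation over 𝒜 is uncountable. -/
open Real Set

private lemma sqrt3_gt : (1.73:ℝ) < Real.sqrt 3 := by
  nlinarith [Real.sq_sqrt (show (0:ℝ) ≤ 3 by norm_num), Real.sqrt_nonneg 3]

private lemma sqrt3_lt : Real.sqrt 3 < 1.74 := by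
  nlinarith [Real.sq_sqrt (show (0:ℝ) ≤ 3 by norm_num), Real.sqrt_nonneg 3]

private lemma num_ineq {β : ℝ} (hβ : 1 + Real.sqrt 3 < β) :
    (β - 1)⁻¹ + β⁻¹ / (1 - (β⁻¹) ^ 10) < 1 := by
  have h2 : (2:ℝ) < β := by linarith [sqrt3_gt]
  have hβ0 : (0:ℝ) < β := by linarith
  have hpow : (2:ℝ)^10 ≤ β^10 := pow_le_pow_left₀ (by norm_num) (by linarith) 10
  have hb10 : (1024:ℝ) ≤ β^10 := by norm_num at hpow ⊢; linarith
  have hx10 : (β⁻¹)^10 = (β^10)⁻¹ := by rw [inv_pow]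
  have hb10pos : (0:ℝ) < β^10 := by positivity
  have hden : (1:ℝ) - (β⁻¹)^10 ≥ 1023/1024 := by
    rw [hx10]
    have : (β^10)⁻¹ ≤ 1/1024 := by
      rw [inv_le_comm₀ (by positivity) (by norm_num)]; linarith
    linarith
  have hdenpos : (0:ℝ) < 1 - (β⁻¹)^10 := by linarith
  have hB : β⁻¹ / (1 - (β⁻¹)^10) ≤ β⁻¹ * (1024/1023) := by
    rw [div_le_iff₀ hdenpos]
    have hxpos : (0:ℝ) < β⁻¹ := by positivity
    nlinarith
  have hA : (β - 1)⁻¹ + β⁻¹ * (1024/1023) < 1 := by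
    have h1 : (0:ℝ) < β - 1 := by linarith
    rw [← sub_pos]
    have key : β^2 - (2 + 1024/1023)*β + 1024/1023 > 0 := by
      nlinarith [sqrt3_lt, sqrt3_gt, mul_pos (show (0:ℝ) < β - 1 - Real.sqrt 3 by linarith)
        (show (0:ℝ) < β - 1 + Real.sqrt 3 - 1024/1023 by nlinarith [sqrt3_gt]),
        Real.sq_sqrt (show (0:ℝ) ≤ 3 by norm_num)]
    have : 1 - ((β-1)⁻¹ + β⁻¹ * (1024/1023))
        = (β^2 - (2 + 1024/1023)*β + 1024/1023) / ((β-1)*β) := by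
      field_simp; ring
    rw [this]
    positivity
  linarith

private lemma ap_bound {x : ℝ} (hx0 : 0 < x) (hx1 : x < 1) (k : ℕ) :
    ∑' j : ℕ, (if (j + (k+1)) % 10 = 0 then x ^ (j+1) else (0:ℝ)) ≤ x / (1 - x ^ 10) := by
  have hx10 : x^10 < 1 := by
    calc x^10 ≤ x^1 := pow_le_pow_of_le_one hx0.le hx1.le (by norm_num)
    _ = x := pow_one x
    _ < 1 := hx1
  have hx10pos : (0:ℝ) < x^10 := by positivity
  set r : ℕ := 9 - k % 10 with hr
  have hrlt : r < 10 := by omega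
  have hcond : ∀ j : ℕ, (j + (k+1)) % 10 = 0 ↔ j % 10 = r := by intro j; omega
  have hre : (fun j : ℕ => (if (j + (k+1)) % 10 = 0 then x ^ (j+1) else (0:ℝ)))
      = fun j => (if j % 10 = r then x ^ (j+1) else (0:ℝ)) := by
    funext j; simp [hcond j]
  rw [hre]
  have hgsum : Summable (fun t : ℕ => x ^ (10*t + r + 1)) := by
    have : (fun t : ℕ => x ^ (10*t + r + 1)) = fun t => x^(r+1) * (x^10)^t := by
      funext t; rw [pow_add, pow_add, pow_mul]; ring
    rw [this]
    exact (summable_geometric_of_lt_one hx10pos.le hx10).mul_left _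
  have hbij : ∑' (j : ℕ), (if j % 10 = r then x ^ (j+1) else (0:ℝ))
      = ∑' t : ℕ, x ^ (10*t + r + 1) := by
    apply tsum_eq_tsum_of_ne_zero_bij (fun t => 10 * (t : ℕ) + r)
    · intro a b hab
      have : 10 * (a:ℕ) + r = 10 * (b:ℕ) + r := hab
      exact Subtype.ext (by omega)
    · intro j hj
      have hj10 : j % 10 = r := by
        by_contra h
        simp [h] at hj
      have hsupp : (fun t : ℕ => x ^ (10*t + r + 1)) (j/10) ≠ 0 := by positivity
      exact ⟨⟨j/10, hsupp⟩, by show 10*(j/10)+r = j; omega⟩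
    · intro t
      rw [if_pos (by omega : (10 * (t:ℕ) + r) % 10 = r)]
  rw [hbij]
  have hmaj : ∑' t : ℕ, x ^ (10*t + r + 1) ≤ ∑' t : ℕ, x ^ (10*t + 1) := by
    apply Summable.tsum_le_tsum _ hgsum
    · have : (fun t : ℕ => x ^ (10*t + 1)) = fun t => x * (x^10)^t := by
        funext t; rw [pow_add, pow_mul, pow_one, mul_comm]
      rw [this]
      exact (summable_geometric_of_lt_one hx10pos.le hx10).mul_left _
    · intro t
      exact pow_le_pow_of_le_one hx0.le hx1.le (by omega)
  have hval : ∑' t : ℕ, x ^ (10*t + 1) = x / (1 - x^10) := by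
    have : (fun t : ℕ => x ^ (10*t + 1)) = fun t => x * (x^10)^t := by
      funext t; rw [pow_add, pow_mul, pow_one, mul_comm]
    rw [this, tsum_mul_left, tsum_geometric_of_lt_one hx10pos.le hx10, div_eq_mul_inv]
  linarith [hmaj, hval.le, hval.ge]

section
variable {x : ℝ}

private lemma summable_bdd (hx0 : 0 < x) (hx1 : x < 1) {d : ℕ → ℝ} {C : ℝ}
    (h : ∀ i, |d i| ≤ C) : Summable (fun i : ℕ => d i * x ^ (i+1)) := by
  apply Summable.of_abs
  apply Summable.of_nonneg_of_le (fun i => abs_nonneg _)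
    (f := fun i : ℕ => C * x ^ (i+1))
  · intro i
    rw [abs_mul, abs_of_nonneg (by positivity : (0:ℝ) ≤ x ^ (i+1))]
    exact mul_le_mul_of_nonneg_right (h i) (by positivity)
  · have : (fun i : ℕ => C * x ^ (i+1)) = fun i => (C * x) * x ^ i := by
      funext i; rw [pow_succ]; ring
    rw [this]
    exact (summable_geometric_of_lt_one hx0.le hx1).mul_left _

private lemma geo_tail (hx0 : 0 < x) (hx1 : x < 1) (c : ℕ) :
    ∑' j : ℕ, x ^ (j + c) = x ^ c / (1 - x) := by
  have : (fun j : ℕ => x ^ (j + c)) = fun j => x ^ c * x ^ j := by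
    funext j; rw [pow_add, mul_comm]
  rw [this, tsum_mul_left, tsum_geometric_of_lt_one hx0.le hx1, div_eq_mul_inv]

end

private lemma core {β : ℝ} (hβ2 : 2 < β)
    (hnum : (β - 1)⁻¹ + β⁻¹ / (1 - (β⁻¹) ^ 10) < 1)
    {m : ℝ} (hm : m < β) {w v : ℕ → ℝ}
    (hw : ∀ i, w i = 1 ∨ (w i = 2 ∧ i % 10 = 0))
    (hv : ∀ i, ∃ a : ℤ, 0 ≤ a ∧ (a:ℝ) ≤ m ∧ v i = a)
    (heq : ∑' i : ℕ, w i * (β⁻¹) ^ (i+1) = ∑' i : ℕ, v i * (β⁻¹) ^ (i+1)) :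
    w = v := by
  classical
  have hβ0 : (0:ℝ) < β := by linarith
  set x : ℝ := β⁻¹ with hxdef
  have hx0 : 0 < x := by positivity
  have hx1 : x < 1 := by
    rw [hxdef, inv_lt_one_iff₀]; right; linarith
  have hm0 : (0:ℝ) ≤ m := by
    obtain ⟨a, ha0, ham, _⟩ := hv 0
    have : (0:ℝ) ≤ (a:ℝ) := by exact_mod_cast ha0
    linarith
  have hwb : ∀ i, 1 ≤ w i ∧ w i ≤ 2 := by
    intro i; rcases hw i with h | ⟨h, _⟩ <;> rw [h] <;> norm_num
  have hvb : ∀ i, 0 ≤ v i ∧ v i ≤ m := by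
    intro i; obtain ⟨a, ha0, ham, hva⟩ := hv i
    rw [hva]; exact ⟨by exact_mod_cast ha0, ham⟩
  have hsw : Summable (fun i : ℕ => w i * x ^ (i+1)) :=
    summable_bdd hx0 hx1 (C := 2) (fun i => abs_le.mpr ⟨by linarith [(hwb i).1], (hwb i).2⟩)
  have hsv : Summable (fun i : ℕ => v i * x ^ (i+1)) :=
    summable_bdd hx0 hx1 (C := m) (fun i => abs_le.mpr ⟨by linarith [(hvb i).1], (hvb i).2⟩)
  by_contra hne
  have hex : ∃ i, w i ≠ v i := Function.ne_iff.mp hne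
  set k := Nat.find hex with hkdef
  have hkne : w k ≠ v k := Nat.find_spec hex
  have hklt : ∀ i, i < k → w i = v i := fun i hi => not_not.mp (Nat.find_min hex hi)
  set f : ℕ → ℝ := fun i => (w i - v i) * x ^ (i+1) with hfdef
  have hsf : Summable f := by
    have : f = fun i => w i * x^(i+1) - v i * x^(i+1) := by funext i; rw [hfdef]; ring
    rw [this]; exact hsw.sub hsv
  have hf0 : ∑' i, f i = 0 := by
    have h1 : ∑' i, f i = ∑' i, (w i * x^(i+1) - v i * x^(i+1)) := by
      apply tsum_congr; intro i; rw [hfdef]; ring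
    rw [h1, Summable.tsum_sub hsw hsv, heq, sub_self]
  have hsplit := (Summable.sum_add_tsum_nat_add (f := f) (k+1) hsf).symm
  have hhead : ∑ i ∈ Finset.range (k+1), f i = f k := by
    apply Finset.sum_eq_single_of_mem k (Finset.self_mem_range_succ k)
    intro i hi hik
    have : i < k := by
      have := Finset.mem_range.mp hi; omega
    rw [hfdef]
    simp [hklt i this]
  set T := ∑' j : ℕ, f (j + (k+1)) with hTdef
  have hTeq : f k + T = 0 := by
    rw [hTdef, ← hhead]; rw [hhead] at hsplit ⊢; linarith [hf0, hsplit]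
  have hst : Summable (fun j : ℕ => f (j + (k+1))) := (summable_nat_add_iff (k+1)).mpr hsf
  have hβne : β ≠ 0 := by linarith
  have hxb : x * β = 1 := by rw [hxdef]; field_simp
  have h1x : (0:ℝ) < 1 - x := by linarith
  have hb1 : (0:ℝ) < β - 1 := by linarith
  have hgt : ∑' j : ℕ, x ^ (j + (k+2)) = x ^ (k+1) / (β - 1) := by
    rw [geo_tail hx0 hx1 (k+2), div_eq_div_iff h1x.ne' hb1.ne']
    linear_combination x^(k+1) * hxb
  have hxk : (0:ℝ) < x ^ (k+1) := by positivity
  -- integer gap at position k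
  obtain ⟨a, ha0, ham, hva⟩ := hv k
  have hint : v k ≤ w k - 1 ∨ w k + 1 ≤ v k := by
    have hwi : ∃ b : ℤ, w k = (b:ℝ) := by
      rcases hw k with h | ⟨h, _⟩
      · exact ⟨1, by rw [h]; norm_num⟩
      · exact ⟨2, by rw [h]; norm_num⟩
    obtain ⟨b, hb⟩ := hwi
    have hab : a ≠ b := by
      intro h; apply hkne; rw [hva, hb, h]
    rcases lt_or_gt_of_ne hab with h | h
    · left; rw [hva, hb]
      have : a + 1 ≤ b := by omega
      have : ((a+1 : ℤ):ℝ) ≤ (b:ℝ) := by exact_mod_cast this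
      push_cast at this; linarith
    · right; rw [hva, hb]
      have : b + 1 ≤ a := by omega
      have : ((b+1 : ℤ):ℝ) ≤ (a:ℝ) := by exact_mod_cast this
      push_cast at this; linarith
  rcases hint with hle | hge
  · -- v k ≤ w k - 1, so f k ≥ x^(k+1); T ≥ (1-m) x^(k+1)/(β-1)
    have hfk : x ^ (k+1) ≤ f k := by
      rw [hfdef]
      calc x^(k+1) = 1 * x^(k+1) := (one_mul _).symm
        _ ≤ (w k - v k) * x^(k+1) :=
          mul_le_mul_of_nonneg_right (by linarith) hxk.le
    have hterm : ∀ j : ℕ, (1 - m) * x ^ (j + (k+2)) ≤ f (j + (k+1)) := by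
      intro j
      rw [hfdef]
      have h1 : 1 - m ≤ w (j + (k+1)) - v (j + (k+1)) := by
        linarith [(hwb (j + (k+1))).1, (hvb (j + (k+1))).2]
      have h2 : (0:ℝ) ≤ x ^ (j + (k+1) + 1) := by positivity
      calc (1-m) * x ^ (j + (k+2)) = (1-m) * x ^ (j + (k+1) + 1) := by ring_nf
        _ ≤ (w (j+(k+1)) - v (j+(k+1))) * x ^ (j+(k+1)+1) :=
          mul_le_mul_of_nonneg_right h1 h2
    have hTlb : (1 - m) * (x^(k+1)/(β-1)) ≤ T := by
      rw [hTdef, ← hgt, ← tsum_mul_left]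
      apply Summable.tsum_le_tsum hterm _ hst
      · exact ((summable_nat_add_iff (k+2)).mpr
          (summable_geometric_of_lt_one hx0.le hx1)).mul_left _
    have : (m - 1) * (x^(k+1)/(β-1)) < 1 * x^(k+1) := by
      rw [one_mul, mul_div_assoc', div_lt_iff₀ hb1]
      have h3 : m - 1 < β - 1 := by linarith
      nlinarith
    nlinarith [hTeq, hfk, hTlb]
  · -- w k + 1 ≤ v k : f k ≤ -x^(k+1), T ≥ x^(k+1), but T < x^(k+1)
    have hfk : f k ≤ -x^(k+1) := by
      rw [hfdef]
      calc (w k - v k) * x^(k+1) ≤ (-1) * x^(k+1) :=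
        mul_le_mul_of_nonneg_right (by linarith) hxk.le
        _ = -x^(k+1) := by ring
    have hgeo1 : Summable (fun j : ℕ => x ^ (j + 1)) :=
      (summable_nat_add_iff 1).mpr (summable_geometric_of_lt_one hx0.le hx1)
    have hchi : Summable (fun j : ℕ => (if (j + (k+1)) % 10 = 0 then x ^ (j+1) else (0:ℝ))) := by
      apply Summable.of_nonneg_of_le _ _ hgeo1
      · intro j; split
        · positivity
        · exact le_rfl
      · intro j; split
        · exact le_rfl
        · positivity
    have hterm2 : ∀ j : ℕ, f (j + (k+1)) ≤ x ^ (j + (k+2))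
        + x^(k+1) * (if (j + (k+1)) % 10 = 0 then x ^ (j+1) else (0:ℝ)) := by
      intro j
      have hxp : (0:ℝ) ≤ x ^ (j + (k+1) + 1) := by positivity
      have hpow : x ^ (j + (k+1) + 1) = x ^ (j + (k+2)) := by ring_nf
      have hpow2 : x^(k+1) * x^(j+1) = x ^ (j + (k+2)) := by rw [← pow_add]; ring_nf
      have hv0 := (hvb (j + (k+1))).1
      rcases hw (j + (k+1)) with h1 | ⟨h2, h10⟩
      · have hup : f (j + (k+1)) ≤ 1 * x ^ (j + (k+1) + 1) := by
          rw [hfdef]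
          exact mul_le_mul_of_nonneg_right (by rw [h1] at *; linarith) hxp
        have hnn : (0:ℝ) ≤ x^(k+1) * (if (j + (k+1)) % 10 = 0 then x ^ (j+1) else (0:ℝ)) := by
          apply mul_nonneg hxk.le
          split
          · positivity
          · exact le_rfl
        calc f (j+(k+1)) ≤ 1 * x^(j+(k+1)+1) := hup
          _ = x ^ (j+(k+2)) := by rw [one_mul, hpow]
          _ ≤ _ := le_add_of_nonneg_right hnn
      · rw [if_pos h10]
        have hup : f (j + (k+1)) ≤ 2 * x ^ (j + (k+1) + 1) := by
          rw [hfdef]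
          exact mul_le_mul_of_nonneg_right (by rw [h2] at *; linarith) hxp
        calc f (j+(k+1)) ≤ 2 * x^(j+(k+1)+1) := hup
          _ = x ^ (j+(k+2)) + x^(k+1) * x^(j+1) := by rw [hpow2, hpow]; ring
    have hsgeo2 : Summable (fun j : ℕ => x ^ (j + (k+2))) :=
      (summable_nat_add_iff (k+2)).mpr (summable_geometric_of_lt_one hx0.le hx1)
    have hsum_rhs : Summable (fun j : ℕ => x ^ (j + (k+2))
        + x^(k+1) * (if (j + (k+1)) % 10 = 0 then x ^ (j+1) else (0:ℝ))) :=
      hsgeo2.add (hchi.mul_left _)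
    have hTub : T ≤ x^(k+1)/(β-1) + x^(k+1) * (x / (1 - x^10)) := by
      have h1 := Summable.tsum_le_tsum hterm2 hst hsum_rhs
      rw [hTdef]
      have h2 : ∑' j : ℕ, (x ^ (j + (k+2))
          + x^(k+1) * (if (j + (k+1)) % 10 = 0 then x ^ (j+1) else (0:ℝ)))
          = (∑' j : ℕ, x ^ (j + (k+2)))
          + x^(k+1) * ∑' j : ℕ, (if (j + (k+1)) % 10 = 0 then x ^ (j+1) else (0:ℝ)) := by
        rw [Summable.tsum_add hsgeo2 (hchi.mul_left _), tsum_mul_left]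
      have h3 := ap_bound hx0 hx1 k
      have h4 : x^(k+1) * ∑' j : ℕ, (if (j + (k+1)) % 10 = 0 then x ^ (j+1) else (0:ℝ))
          ≤ x^(k+1) * (x / (1 - x^10)) := mul_le_mul_of_nonneg_left h3 hxk.le
      rw [h2, hgt] at h1
      linarith
    have hTlb : x^(k+1) ≤ T := by linarith
    have hx10 : x^10 < 1 := by
      calc x^10 ≤ x^1 := pow_le_pow_of_le_one hx0.le hx1.le (by norm_num)
        _ = x := pow_one x
        _ < 1 := hx1
    have hfinal : x^(k+1)/(β-1) + x^(k+1) * (x/(1-x^10)) < x^(k+1) := by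
      calc x^(k+1)/(β-1) + x^(k+1) * (x/(1-x^10))
          = x^(k+1) * ((β-1)⁻¹ + x/(1-x^10)) := by rw [div_eq_mul_inv]; ring
        _ < x^(k+1) * 1 := by
            apply mul_lt_mul_of_pos_left _ hxk
            exact hnum
        _ = x^(k+1) := mul_one _
    linarith

theorem stmt18 (β : ℝ) (hβ : 1 + Real.sqrt 3 < β) (hni : ∀ n : ℕ, β ≠ n) :
    ¬ Set.Countable {x : ℝ | ∃! s : ℕ → ℝ,
        (∀ i, ∃ a : ℤ, 0 ≤ a ∧ a ≤ ⌊β⌋ ∧ s i = (a : ℝ)) ∧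
        x = ∑' i : ℕ, s i / (-β) ^ (i + 1)} := by
  classical
  intro hcount
  have hβ2 : (2:ℝ) < β := by linarith [sqrt3_gt]
  have hβ0 : (0:ℝ) < β := by linarith
  have hβne : β ≠ 0 := by linarith
  have hnum := num_ineq hβ
  set x : ℝ := β⁻¹ with hxdef
  have hx0 : 0 < x := by positivity
  have hx1 : x < 1 := by rw [hxdef, inv_lt_one_iff₀]; right; linarith
  set m : ℝ := (⌊β⌋ : ℝ) with hmdef
  have h2Z : (2:ℤ) ≤ ⌊β⌋ := Int.le_floor.mpr (by exact_mod_cast hβ2.le)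
  have hm2 : (2:ℝ) ≤ m := by rw [hmdef]; exact_mod_cast h2Z
  have hmle : m ≤ β := Int.floor_le β
  have hmβ : m < β := by
    rcases lt_or_eq_of_le hmle with h | h
    · exact h
    · exfalso
      have h0Z : (0:ℤ) ≤ ⌊β⌋ := by omega
      apply hni ⌊β⌋.toNat
      have hcast : ((⌊β⌋.toNat : ℕ) : ℝ) = ((⌊β⌋ : ℤ) : ℝ) := by
        norm_cast
        exact Int.toNat_of_nonneg h0Z
      rw [hcast, ← hmdef]
      exact h.symm
  have hm0 : (0:ℝ) ≤ m := by linarith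
  -- the digit sequences
  set w : Set ℕ → ℕ → ℝ := fun S i => if i % 10 = 0 ∧ i / 10 ∈ S then 2 else 1 with hwdef
  set sf : Set ℕ → ℕ → ℝ := fun S i => if Even i then w S i else m - w S i with hsfdef
  set xv : Set ℕ → ℝ := fun S => ∑' i : ℕ, sf S i / (-β) ^ (i+1) with hxvdef
  have hwprop : ∀ S i, w S i = 1 ∨ (w S i = 2 ∧ i % 10 = 0) := by
    intro S i
    by_cases h : i % 10 = 0 ∧ i / 10 ∈ S
    · right; exact ⟨if_pos h, h.1⟩
    · left; exact if_neg h
  -- term transformation identity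
  have hterm_id : ∀ (t : ℕ → ℝ) (i : ℕ),
      t i / (-β) ^ (i+1)
        = (if Even i then (0:ℝ) else m) * x^(i+1)
          - (if Even i then t i else m - t i) * x^(i+1) := by
    intro t i
    have hxpow : x^(i+1) = (β^(i+1))⁻¹ := by rw [hxdef, inv_pow]
    rcases Nat.even_or_odd i with h | h
    · have ho : Odd (i+1) := Even.add_one h
      rw [if_pos h, if_pos h, ho.neg_pow, hxpow, div_neg, div_eq_mul_inv]
      ring
    · have hne' : ¬ Even i := Nat.not_even_iff_odd.mpr h
      have he : Even (i+1) := Odd.add_one h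
      rw [if_neg hne', if_neg hne', he.neg_pow, hxpow, div_eq_mul_inv]
      ring
  -- summability of M-series
  have hsM : Summable (fun i : ℕ => (if Even i then (0:ℝ) else m) * x^(i+1)) := by
    apply summable_bdd hx0 hx1 (C := m)
    intro i; split
    · rw [abs_zero]; exact hm0
    · rw [abs_of_nonneg hm0]
  set M : ℝ := ∑' i : ℕ, (if Even i then (0:ℝ) else m) * x^(i+1) with hMdef
  -- key: rewriting a representation
  have key : ∀ t : ℕ → ℝ, (∀ i, ∃ a : ℤ, 0 ≤ a ∧ a ≤ ⌊β⌋ ∧ t i = (a:ℝ)) →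
      ∑' i : ℕ, t i / (-β) ^ (i+1)
        = M - ∑' i : ℕ, (if Even i then t i else m - t i) * x^(i+1) := by
    intro t ht
    have hvb : ∀ i, |(if Even i then t i else m - t i)| ≤ m := by
      intro i
      obtain ⟨a, ha0, ham, hta⟩ := ht i
      have ha0' : (0:ℝ) ≤ (a:ℝ) := by exact_mod_cast ha0
      have ham' : (a:ℝ) ≤ m := by rw [hmdef]; exact_mod_cast ham
      rw [abs_le]; split <;> rw [hta] <;> constructor <;> linarith
    have hsv : Summable (fun i : ℕ => (if Even i then t i else m - t i) * x^(i+1)) :=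
      summable_bdd hx0 hx1 hvb
    rw [show (fun i : ℕ => t i / (-β) ^ (i+1))
        = fun i => (if Even i then (0:ℝ) else m) * x^(i+1)
          - (if Even i then t i else m - t i) * x^(i+1) from funext (hterm_id t)]
    exact Summable.tsum_sub hsM hsv
  -- transformed sequence of sf S is w S
  have htr_sf : ∀ S, (fun i => if Even i then sf S i else m - sf S i) = w S := by
    intro S; funext i
    rw [hsfdef]
    rcases Nat.even_or_odd i with h | h
    · simp only [if_pos h]
    · have hne' : ¬ Even i := Nat.not_even_iff_odd.mpr h
      simp only [if_neg hne']
      ring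
  -- sf S satisfies the digit condition
  have hsf_digit : ∀ S, ∀ i, ∃ a : ℤ, 0 ≤ a ∧ a ≤ ⌊β⌋ ∧ sf S i = (a:ℝ) := by
    intro S i
    rcases Nat.even_or_odd i with h | h
    · rcases hwprop S i with hw1 | ⟨hw2, _⟩
      · exact ⟨1, by omega, by omega, by rw [hsfdef]; simp only [if_pos h]; rw [hw1]; norm_num⟩
      · exact ⟨2, by omega, by omega, by rw [hsfdef]; simp only [if_pos h]; rw [hw2]; norm_num⟩
    · have hne' : ¬ Even i := Nat.not_even_iff_odd.mpr h
      rcases hwprop S i with hw1 | ⟨hw2, _⟩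
      · refine ⟨⌊β⌋ - 1, by omega, by omega, ?_⟩
        rw [hsfdef]; simp only [if_neg hne']; rw [hw1, hmdef]; push_cast; ring
      · refine ⟨⌊β⌋ - 2, by omega, by omega, ?_⟩
        rw [hsfdef]; simp only [if_neg hne']; rw [hw2, hmdef]; push_cast; ring
  -- digit condition for transformed arbitrary representation
  have htr_digit : ∀ t : ℕ → ℝ, (∀ i, ∃ a : ℤ, 0 ≤ a ∧ a ≤ ⌊β⌋ ∧ t i = (a:ℝ)) →
      ∀ i, ∃ a : ℤ, 0 ≤ a ∧ (a:ℝ) ≤ m ∧ (if Even i then t i else m - t i) = (a:ℝ) := by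
    intro t ht i
    obtain ⟨a, ha0, ham, hta⟩ := ht i
    rcases Nat.even_or_odd i with h | h
    · refine ⟨a, ha0, by rw [hmdef]; exact_mod_cast ham, by rw [if_pos h]; exact hta⟩
    · have ha0' : (0:ℝ) ≤ (a:ℝ) := by exact_mod_cast ha0
      refine ⟨⌊β⌋ - a, by omega, ?_, ?_⟩
      · rw [hmdef]; push_cast; linarith
      · rw [if_neg (Nat.not_even_iff_odd.mpr h), hta, hmdef]; push_cast; ring
  -- uniqueness of representation of xv S
  have huniq : ∀ S, ∀ t : ℕ → ℝ, (∀ i, ∃ a : ℤ, 0 ≤ a ∧ a ≤ ⌊β⌋ ∧ t i = (a:ℝ)) →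
      xv S = ∑' i : ℕ, t i / (-β) ^ (i+1) → t = sf S := by
    intro S t htd hteq
    have h1 : ∑' i : ℕ, w S i * x^(i+1)
        = ∑' i : ℕ, (if Even i then t i else m - t i) * x^(i+1) := by
      have e1 := key (sf S) (hsf_digit S)
      have e2 := key t htd
      have e1' : ∑' i : ℕ, (if Even i then sf S i else m - sf S i) * x^(i+1)
          = ∑' i : ℕ, w S i * x^(i+1) :=
        tsum_congr (fun i => by rw [congrFun (htr_sf S) i])
      rw [e1'] at e1
      rw [hxvdef] at hteq
      simp only at hteq
      rw [e1, e2] at hteq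
      linarith
    have hcore := core hβ2 hnum hmβ (hwprop S) (htr_digit t htd) h1
    funext i
    have hi := congrFun hcore i
    rcases Nat.even_or_odd i with h | h
    · rw [if_pos h] at hi
      rw [hsfdef]; simp only [if_pos h]; exact hi.symm
    · have hne' : ¬ Even i := Nat.not_even_iff_odd.mpr h
      rw [if_neg hne'] at hi
      rw [hsfdef]; simp only [if_neg hne']
      linarith
  -- membership
  have hmem : ∀ S, xv S ∈ {x : ℝ | ∃! s : ℕ → ℝ,
      (∀ i, ∃ a : ℤ, 0 ≤ a ∧ a ≤ ⌊β⌋ ∧ s i = (a : ℝ)) ∧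
      x = ∑' i : ℕ, s i / (-β) ^ (i + 1)} := by
    intro S
    refine ⟨sf S, ⟨hsf_digit S, rfl⟩, ?_⟩
    rintro t ⟨htd, hteq⟩
    exact huniq S t htd hteq
  -- injectivity
  have hinj : Function.Injective xv := by
    intro S S' h
    have h1 : sf S' = sf S := huniq S (sf S') (hsf_digit S') (by rw [h])
    ext n
    have h2 := congrFun h1 (10 * n)
    have heven : Even (10 * n) := ⟨5 * n, by ring⟩
    rw [hsfdef] at h2
    simp only [if_pos heven] at h2
    rw [hwdef] at h2
    simp only [Nat.mul_mod_right, Nat.mul_div_cancel_left n (by norm_num : 0 < 10), true_and] at h2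
    by_cases hS : n ∈ S <;> by_cases hS' : n ∈ S' <;>
      simp [hS, hS'] at h2 ⊢ <;> norm_num at h2
  -- conclude
  have hpre := hcount.preimage hinj
  have huniv : xv ⁻¹' {x : ℝ | ∃! s : ℕ → ℝ,
      (∀ i, ∃ a : ℤ, 0 ≤ a ∧ a ≤ ⌊β⌋ ∧ s i = (a : ℝ)) ∧
      x = ∑' i : ℕ, s i / (-β) ^ (i + 1)} = Set.univ :=
    Set.eq_univ_of_forall (fun S => hmem S)
  rw [huniv] at hpre
  haveI : Countable (Set ℕ) := Set.countable_univ_iff.mp hpre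
  obtain ⟨g, hg⟩ := exists_injective_nat (Set ℕ)
  exact Function.cantor_injective g hg
end

section
/- Let μ be the unique real root of x³ − x² − x − 1 = 0 (the Tribonacci constant, 1 < μ < 2). Then the set {x ∈ J_{−μ,{0,1}} : R_{−μ,{0,1}}(x) is a singleton} of numbers having a unique (−μ)-representation over the alphabet {0,1} is uncountable. -/
open Function

namespace Stmt19Aux

open scoped Classical in
/-- block sequence: blocks of length 4, pattern 0,0,b,b -/
noncomputable def sb (A : Set ℕ) (i : ℕ) : ℝ :=
  if 2 ≤ i % 4 ∧ i / 4 ∈ A then 1 else 0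

lemma sb_mem (A : Set ℕ) (i : ℕ) : sb A i = 0 ∨ sb A i = 1 := by
  unfold sb; split
  · right; rfl
  · left; rfl

lemma sb_lo (A : Set ℕ) {i : ℕ} (h : i % 4 < 2) : sb A i = 0 := by
  unfold sb
  rw [if_neg]; rintro ⟨h2, -⟩; omega

lemma sb_one {A : Set ℕ} {i : ℕ} (h : sb A i = 1) : 2 ≤ i % 4 ∧ i / 4 ∈ A := by
  by_contra hc
  unfold sb at h
  rw [if_neg hc] at h
  norm_num at h

lemma sb_of_mem {A : Set ℕ} {i : ℕ} (h2 : 2 ≤ i % 4) (hm : i / 4 ∈ A) : sb A i = 1 := by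
  unfold sb
  rw [if_pos ⟨h2, hm⟩]

lemma sb_of_not_mem {A : Set ℕ} {i : ℕ} (hm : i / 4 ∉ A) : sb A i = 0 := by
  unfold sb
  rw [if_neg]; rintro ⟨-, h⟩; exact hm h

section Steps

variable {μ : ℝ} (h18 : 1.8 < μ) (h19 : μ < 1.9) (hroot : μ ^ 3 = μ ^ 2 + μ + 1)

include h18 h19 in
lemma stepMu {dp T' : ℝ} (hd : dp = -1 ∨ dp = 0 ∨ dp = 1)
    (hrec : T' = μ * (dp - μ)) (hbl : -μ ≤ T' * (μ - 1)) (hbu : T' * (μ - 1) ≤ μ) :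
    dp = 1 ∧ T' = μ - μ ^ 2 := by
  rcases hd with h | h | h <;> subst h
  · exfalso; rw [hrec] at hbl hbu; nlinarith [sq_nonneg μ, sq_nonneg (μ - 1)]
  · exfalso; rw [hrec] at hbl hbu; nlinarith [sq_nonneg μ, sq_nonneg (μ - 1)]
  · exact ⟨rfl, by rw [hrec]; ring⟩

include h18 h19 in
lemma stepNegMu {dp T' : ℝ} (hd : dp = -1 ∨ dp = 0 ∨ dp = 1)
    (hrec : T' = μ * (dp + μ)) (hbl : -μ ≤ T' * (μ - 1)) (hbu : T' * (μ - 1) ≤ μ) :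
    dp = -1 ∧ T' = μ ^ 2 - μ := by
  rcases hd with h | h | h <;> subst h
  · exact ⟨rfl, by rw [hrec]; ring⟩
  · exfalso; rw [hrec] at hbl hbu; nlinarith [sq_nonneg μ, sq_nonneg (μ - 1)]
  · exfalso; rw [hrec] at hbl hbu; nlinarith [sq_nonneg μ, sq_nonneg (μ - 1)]

include h18 h19 hroot in
lemma stepM {dp T' : ℝ} (hd : dp = -1 ∨ dp = 0 ∨ dp = 1)
    (hrec : T' = μ * (dp - (μ - μ ^ 2))) (hbl : -μ ≤ T' * (μ - 1)) (hbu : T' * (μ - 1) ≤ μ) :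
    dp = -1 ∧ T' = 1 := by
  rcases hd with h | h | h <;> subst h
  · exact ⟨rfl, by rw [hrec]; nlinarith [hroot]⟩
  · exfalso; rw [hrec] at hbl hbu; nlinarith [sq_nonneg μ, sq_nonneg (μ - 1)]
  · exfalso; rw [hrec] at hbl hbu; nlinarith [sq_nonneg μ, sq_nonneg (μ - 1)]

include h18 h19 hroot in
lemma stepNegM {dp T' : ℝ} (hd : dp = -1 ∨ dp = 0 ∨ dp = 1)
    (hrec : T' = μ * (dp - (μ ^ 2 - μ))) (hbl : -μ ≤ T' * (μ - 1)) (hbu : T' * (μ - 1) ≤ μ) :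
    dp = 1 ∧ T' = -1 := by
  rcases hd with h | h | h <;> subst h
  · exfalso; rw [hrec] at hbl hbu; nlinarith [sq_nonneg μ, sq_nonneg (μ - 1)]
  · exfalso; rw [hrec] at hbl hbu; nlinarith [sq_nonneg μ, sq_nonneg (μ - 1)]
  · exact ⟨rfl, by rw [hrec]; nlinarith [hroot]⟩

include h18 h19 in
lemma stepOne {dp T' : ℝ} (hd : dp = -1 ∨ dp = 0 ∨ dp = 1)
    (hrec : T' = μ * (dp - 1)) (hbl : -μ ≤ T' * (μ - 1)) (hbu : T' * (μ - 1) ≤ μ) :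
    dp = 0 ∨ dp = 1 := by
  rcases hd with h | h | h
  · exfalso; subst h; rw [hrec] at hbl hbu; nlinarith [sq_nonneg μ, sq_nonneg (μ - 1)]
  · exact Or.inl h
  · exact Or.inr h

include h18 h19 in
lemma stepNegOne {dp T' : ℝ} (hd : dp = -1 ∨ dp = 0 ∨ dp = 1)
    (hrec : T' = μ * (dp + 1)) (hbl : -μ ≤ T' * (μ - 1)) (hbu : T' * (μ - 1) ≤ μ) :
    dp = -1 ∨ dp = 0 := by
  rcases hd with h | h | h
  · exact Or.inl h
  · exact Or.inr h
  · exfalso; subst h; rw [hrec] at hbl hbu; nlinarith [sq_nonneg μ, sq_nonneg (μ - 1)]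

end Steps

/-- Main uniqueness lemma: any {0,1}-representation of the value represented by `sb A`
equals `sb A`. -/
lemma uniq {μ : ℝ} (h18 : 1.8 < μ) (h19 : μ < 1.9) (hroot : μ ^ 3 = μ ^ 2 + μ + 1)
    (A : Set ℕ) (t : ℕ → ℝ) (ht : ∀ i, t i = 0 ∨ t i = 1)
    (hx : ∑' i : ℕ, sb A i / (-μ) ^ (i + 1) = ∑' i : ℕ, t i / (-μ) ^ (i + 1)) :
    t = sb A := by
  have hμ0 : 0 < μ := by linarith
  have hμ1 : 1 < μ := by linarith
  have hq0 : 0 < μ⁻¹ := inv_pos.mpr hμ0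
  have hq1 : μ⁻¹ < 1 := inv_lt_one_of_one_lt₀ hμ1
  set c : ℝ := -μ⁻¹ with hc
  have hcabs : |c| = μ⁻¹ := by rw [hc, abs_neg, abs_of_pos hq0]
  have hcne : c ≠ 0 := by
    rw [hc]; simp [hμ0.ne']
  set d : ℕ → ℝ := fun i => sb A i - t i with hdd
  have hd : ∀ i, d i = -1 ∨ d i = 0 ∨ d i = 1 := by
    intro i
    simp only [hdd]
    rcases sb_mem A i with h1 | h1 <;> rcases ht i with h2 | h2 <;>
      rw [h1, h2] <;> norm_num
  have hd1pos : ∀ i, d i = 1 → sb A i = 1 := by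
    intro i h
    simp only [hdd] at h
    rcases sb_mem A i with h1 | h1
    · exfalso; rcases ht i with h2 | h2 <;> rw [h1, h2] at h <;> norm_num at h
    · exact h1
  have hd1neg : ∀ i, d i = -1 → sb A i = 0 := by
    intro i h
    simp only [hdd] at h
    rcases sb_mem A i with h1 | h1
    · exact h1
    · exfalso; rcases ht i with h2 | h2 <;> rw [h1, h2] at h <;> norm_num at h
  have hdabs : ∀ i, |d i| ≤ 1 := by
    intro i
    rcases hd i with h | h | h <;> rw [h] <;> norm_num
  have hgeo : Summable (fun j : ℕ => (μ⁻¹) ^ j) := summable_geometric_of_lt_one hq0.le hq1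
  have hsum : ∀ p : ℕ, Summable (fun j : ℕ => d (p + j) * c ^ j) := by
    intro p
    apply Summable.of_norm_bounded hgeo
    intro j
    rw [norm_mul, norm_pow, Real.norm_eq_abs, Real.norm_eq_abs, hcabs]
    calc |d (p + j)| * μ⁻¹ ^ j ≤ 1 * μ⁻¹ ^ j := by
          apply mul_le_mul_of_nonneg_right (hdabs _) (by positivity)
      _ = μ⁻¹ ^ j := one_mul _
  set T : ℕ → ℝ := fun p => ∑' j : ℕ, d (p + j) * c ^ j with hT
  have hrecT : ∀ p, T p = d p + c * T (p + 1) := by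
    intro p
    have h1 : T p = d (p + 0) * c ^ 0 + ∑' j : ℕ, d (p + (j + 1)) * c ^ (j + 1) :=
      Summable.tsum_eq_zero_add (hsum p)
    have h2 : ∀ j : ℕ, d (p + (j + 1)) * c ^ (j + 1) = c * (d ((p + 1) + j) * c ^ j) := by
      intro j
      rw [show p + (j + 1) = (p + 1) + j from by ring]
      ring
    rw [h1, tsum_congr h2, tsum_mul_left]
    simp [hT]
  have hstep : ∀ p, T (p + 1) = μ * (d p - T p) := by
    intro p
    have h0 := hrecT p
    have hmc : (-μ) * c = 1 := by
      rw [hc]; field_simp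
    calc T (p + 1) = ((-μ) * c) * T (p + 1) := by rw [hmc, one_mul]
      _ = (-μ) * (c * T (p + 1)) := by ring
      _ = (-μ) * (T p - d p) := by rw [show c * T (p + 1) = T p - d p from by linarith]
      _ = μ * (d p - T p) := by ring
  have hTabs : ∀ p, |T p| ≤ (1 - μ⁻¹)⁻¹ := by
    intro p
    have h1 : ‖T p‖ ≤ ∑' j : ℕ, (μ⁻¹) ^ j := by
      apply tsum_of_norm_bounded hgeo.hasSum
      intro j
      rw [norm_mul, norm_pow, Real.norm_eq_abs, Real.norm_eq_abs, hcabs]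
      calc |d (p + j)| * μ⁻¹ ^ j ≤ 1 * μ⁻¹ ^ j := by
            apply mul_le_mul_of_nonneg_right (hdabs _) (by positivity)
        _ = μ⁻¹ ^ j := one_mul _
    rwa [Real.norm_eq_abs, tsum_geometric_of_lt_one hq0.le hq1] at h1
  have hb : ∀ p, -μ ≤ T p * (μ - 1) ∧ T p * (μ - 1) ≤ μ := by
    intro p
    have h1 := abs_le.mp (hTabs p)
    have hM : (1 - μ⁻¹)⁻¹ * (μ - 1) = μ := by
      have hne : μ - 1 ≠ 0 := by linarith
      have h2 : (1 : ℝ) - μ⁻¹ = (μ - 1) / μ := by field_simp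
      rw [h2, inv_div, div_mul_cancel₀ _ hne]
    have hpos : (0 : ℝ) < μ - 1 := by linarith
    constructor
    · nlinarith [h1.1, mul_nonneg (by linarith [h1.1] : (0:ℝ) ≤ T p + (1 - μ⁻¹)⁻¹) hpos.le]
    · nlinarith [h1.2, mul_nonneg (by linarith [h1.2] : (0:ℝ) ≤ (1 - μ⁻¹)⁻¹ - T p) hpos.le]
  -- T 0 = 0
  have hpow : ∀ (y : ℕ → ℝ) (i : ℕ), y i / (-μ) ^ (i + 1) = y i * c ^ (i + 1) := by
    intro y i
    rw [div_eq_mul_inv, ← inv_pow, hc, inv_neg]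
  have hsummand : ∀ y : ℕ → ℝ, (∀ i, y i = 0 ∨ y i = 1) →
      Summable (fun i : ℕ => y i / (-μ) ^ (i + 1)) := by
    intro y hy
    apply Summable.of_norm_bounded hgeo
    intro i
    rw [hpow y i, norm_mul, norm_pow, Real.norm_eq_abs, Real.norm_eq_abs, hcabs]
    have h1 : |y i| ≤ 1 := by rcases hy i with h | h <;> rw [h] <;> norm_num
    calc |y i| * μ⁻¹ ^ (i + 1) ≤ 1 * μ⁻¹ ^ (i + 1) := by
          apply mul_le_mul_of_nonneg_right h1 (by positivity)
      _ = μ⁻¹ * μ⁻¹ ^ i := by ring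
      _ ≤ 1 * μ⁻¹ ^ i := by
          apply mul_le_mul_of_nonneg_right hq1.le (by positivity)
      _ = μ⁻¹ ^ i := one_mul _
  have hT0 : T 0 = 0 := by
    have hs1 := hsummand (sb A) (sb_mem A)
    have hs2 := hsummand t ht
    have hdiff : ∑' i : ℕ, (sb A i / (-μ) ^ (i + 1) - t i / (-μ) ^ (i + 1)) = 0 := by
      rw [Summable.tsum_sub hs1 hs2, hx, sub_self]
    have h3 : ∀ i : ℕ, sb A i / (-μ) ^ (i + 1) - t i / (-μ) ^ (i + 1)
        = c * (d (0 + i) * c ^ i) := by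
      intro i
      rw [hpow (sb A) i, hpow t i]
      simp only [hdd, zero_add]
      ring
    rw [tsum_congr h3, tsum_mul_left] at hdiff
    rcases mul_eq_zero.mp hdiff with h | h
    · exact absurd h hcne
    · exact h
  -- main argument
  suffices hall : ∀ i, d i = 0 by
    funext i
    have := hall i
    simp only [hdd] at this
    linarith
  by_contra hcon
  push_neg at hcon
  obtain ⟨i0, hi0⟩ := hcon
  classical
  have hex : ∃ n, d n ≠ 0 := ⟨i0, hi0⟩
  set k := Nat.find hex with hk
  have hdk : d k ≠ 0 := Nat.find_spec hex
  have hmin : ∀ m, m < k → d m = 0 := by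
    intro m hm
    have h1 : m < Nat.find hex := by omega
    have h2 := Nat.find_min hex h1
    exact not_not.mp h2
  have hTk : ∀ p, p ≤ k → T p = 0 := by
    intro p
    induction p with
    | zero => intro _; exact hT0
    | succ n ih =>
      intro hle
      rw [hstep n, ih (by omega), hmin n (by omega)]
      ring
  have hdk' : d k = -1 ∨ d k = 1 := by
    rcases hd k with h | h | h
    · exact Or.inl h
    · exact absurd h hdk
    · exact Or.inr h
  rcases hdk' with hA1 | hA1
  · -- Case B : d k = -1, trigger 001
    have hTk1 : T (k + 1) = -μ := by
      rw [hstep k, hTk k le_rfl, hA1]; ring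
    obtain ⟨hdk1, hTk2⟩ := stepNegMu h18 h19 (hd (k + 1))
      (by rw [hstep (k + 1), hTk1]; ring) (hb (k + 2)).1 (hb (k + 2)).2
    have hsk1 : sb A (k + 1) = 0 := hd1neg _ hdk1
    obtain ⟨hdk2, hTk3⟩ := stepNegM h18 h19 hroot (hd (k + 2))
      (by rw [hstep (k + 2), hTk2]) (hb (k + 3)).1 (hb (k + 3)).2
    have hsk2 : sb A (k + 2) = 1 := hd1pos _ hdk2
    obtain ⟨hm2, hmem2⟩ := sb_one hsk2
    have hcases : (k + 2) % 4 = 2 ∨ (k + 2) % 4 = 3 := by omega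
    rcases hcases with hcc | hcc
    · -- (k+2)%4 = 2
      have hsk3 : sb A (k + 3) = 1 := by
        apply sb_of_mem (by omega)
        rwa [show (k + 3) / 4 = (k + 2) / 4 from by omega]
      have hdk3 : d (k + 3) = 0 := by
        rcases stepNegOne h18 h19 (hd (k + 3))
            (by rw [hstep (k + 3), hTk3]; ring) (hb (k + 4)).1 (hb (k + 4)).2 with h | h
        · exfalso
          have := hd1neg _ h
          rw [hsk3] at this; norm_num at this
        · exact h
      have hTk4 : T (k + 4) = μ := by
        rw [hstep (k + 3), hdk3, hTk3]; ring
      obtain ⟨hdk4, -⟩ := stepMu h18 h19 (hd (k + 4))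
        (by rw [hstep (k + 4), hTk4]) (hb (k + 5)).1 (hb (k + 5)).2
      have hsk4 : sb A (k + 4) = 1 := hd1pos _ hdk4
      have := (sb_one hsk4).1
      omega
    · -- (k+2)%4 = 3 : contradiction with sb (k+1) = 0
      have hcontra : sb A (k + 1) = 1 := by
        apply sb_of_mem (by omega)
        rwa [show (k + 1) / 4 = (k + 2) / 4 from by omega]
      rw [hsk1] at hcontra; norm_num at hcontra
  · -- Case A : d k = 1, trigger 110
    have hsk : sb A k = 1 := hd1pos _ hA1
    obtain ⟨hm0, hmem0⟩ := sb_one hsk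
    have hTk1 : T (k + 1) = μ := by
      rw [hstep k, hTk k le_rfl, hA1]; ring
    obtain ⟨hdk1, hTk2⟩ := stepMu h18 h19 (hd (k + 1))
      (by rw [hstep (k + 1), hTk1]) (hb (k + 2)).1 (hb (k + 2)).2
    have hsk1 : sb A (k + 1) = 1 := hd1pos _ hdk1
    have hm1 := (sb_one hsk1).1
    have hkm : k % 4 = 2 := by omega
    obtain ⟨hdk2, hTk3⟩ := stepM h18 h19 hroot (hd (k + 2))
      (by rw [hstep (k + 2), hTk2]) (hb (k + 3)).1 (hb (k + 3)).2
    have hsk3 : sb A (k + 3) = 0 := sb_lo A (by omega)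
    have hdk3 : d (k + 3) = 0 := by
      rcases stepOne h18 h19 (hd (k + 3))
          (by rw [hstep (k + 3), hTk3]) (hb (k + 4)).1 (hb (k + 4)).2 with h | h
      · exact h
      · exfalso
        have := hd1pos _ h
        rw [hsk3] at this; norm_num at this
    have hTk4 : T (k + 4) = -μ := by
      rw [hstep (k + 3), hdk3, hTk3]; ring
    obtain ⟨hdk4, hTk5⟩ := stepNegMu h18 h19 (hd (k + 4))
      (by rw [hstep (k + 4), hTk4]; ring) (hb (k + 5)).1 (hb (k + 5)).2
    have hsk4 : sb A (k + 4) = 0 := hd1neg _ hdk4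
    obtain ⟨hdk5, -⟩ := stepNegM h18 h19 hroot (hd (k + 5))
      (by rw [hstep (k + 5), hTk5]) (hb (k + 6)).1 (hb (k + 6)).2
    have hsk5 : sb A (k + 5) = 1 := hd1pos _ hdk5
    obtain ⟨-, hmem5⟩ := sb_one hsk5
    have hnot4 : (k + 4) / 4 ∉ A := by
      intro hm
      have hbad := sb_of_mem (A := A) (i := k + 4) (by omega) hm
      rw [hsk4] at hbad; norm_num at hbad
    exact hnot4 (by rwa [show (k + 4) / 4 = (k + 5) / 4 from by omega])

end Stmt19Aux

theorem stmt19 (μ : ℝ) (hμ1 : 1 < μ) (hμ2 : μ < 2)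
    (hroot : μ ^ 3 = μ ^ 2 + μ + 1) :
    ¬ Set.Countable {x : ℝ | ∃! s : ℕ → ℝ,
        (∀ i, s i = 0 ∨ s i = 1) ∧ x = ∑' i : ℕ, s i / (-μ) ^ (i + 1)} := by
  intro hc
  have h18 : (1.8 : ℝ) < μ := by
    nlinarith [sq_nonneg (μ - 1), sq_nonneg μ, sq_nonneg (μ + 1), sq_nonneg (μ - 2)]
  have h19 : μ < (1.9 : ℝ) := by
    nlinarith [sq_nonneg (μ - 1), sq_nonneg μ, sq_nonneg (μ + 1), sq_nonneg (μ - 2)]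
  set S := {x : ℝ | ∃! s : ℕ → ℝ,
      (∀ i, s i = 0 ∨ s i = 1) ∧ x = ∑' i : ℕ, s i / (-μ) ^ (i + 1)} with hS
  have hmem : ∀ A : Set ℕ,
      (∑' i : ℕ, Stmt19Aux.sb A i / (-μ) ^ (i + 1)) ∈ S := by
    intro A
    refine ⟨Stmt19Aux.sb A, ⟨Stmt19Aux.sb_mem A, rfl⟩, ?_⟩
    rintro y ⟨hy1, hy2⟩
    exact Stmt19Aux.uniq h18 h19 hroot A y hy1 hy2
  have hinj : ∀ A B : Set ℕ,
      (∑' i : ℕ, Stmt19Aux.sb A i / (-μ) ^ (i + 1))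
        = (∑' i : ℕ, Stmt19Aux.sb B i / (-μ) ^ (i + 1)) → A = B := by
    intro A B hAB
    have h1 : Stmt19Aux.sb B = Stmt19Aux.sb A :=
      Stmt19Aux.uniq h18 h19 hroot A (Stmt19Aux.sb B) (Stmt19Aux.sb_mem B) hAB
    ext j
    have h2 := congrFun h1 (4 * j + 2)
    have hmod : (4 * j + 2) % 4 = 2 := by omega
    have hdiv : (4 * j + 2) / 4 = j := by omega
    constructor
    · intro hj
      by_contra hbb
      rw [Stmt19Aux.sb_of_not_mem (by rw [hdiv]; exact hbb),
        Stmt19Aux.sb_of_mem (by omega) (by rw [hdiv]; exact hj)] at h2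
      norm_num at h2
    · intro hj
      by_contra hbb
      rw [Stmt19Aux.sb_of_mem (by omega) (by rw [hdiv]; exact hj),
        Stmt19Aux.sb_of_not_mem (by rw [hdiv]; exact hbb)] at h2
      norm_num at h2
  have hcS : Countable S := hc.to_subtype
  obtain ⟨g, hg⟩ := Countable.exists_injective_nat S
  apply Function.cantor_injective
    (fun A : Set ℕ => g ⟨∑' i : ℕ, Stmt19Aux.sb A i / (-μ) ^ (i + 1), hmem A⟩)
  intro A B h
  exact hinj A B (Subtype.ext_iff.mp (hg h))
end
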